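/- Let 𝒴 be a finite linearly ordered set and let Q, Q' : 𝒴 → (0,1] be strictly positive probability mass functions on 𝒴. Let (w_k)_{k≥1} be a probability mass function on the positive integers with probability generating function φ(z) = ∑_{k≥1} w_k z^k, and suppose its derivative φ'(z) = ∑_{k≥1} k·w_k·z^{k−1} is finite and strictly positive for all z ∈ [0,1]. Define A(y) = φ(Q(≤y)) − φ(Q(<y)) and A'(y) = φ(Q'(≤y)) − φ(Q'(<y)), where Q(≤y) = ∑_{z≤y} Q(z) and Q(<y) = ∑_{z<y} Q(z). Let f : [0,∞) → ℝ be a convex function. Then there exists, for each y ∈ 𝒴, a function g_y : 𝒴 → [0,1] such that, setting q_y = ∑_{z∈𝒴} g_y(z)·Q(z) and q'_y = ∑_{z∈𝒴} g_y(z)·Q'(z), one has ∑_{y∈𝒴} f(A(y)/A'(y)) · A'(y) ≤ ∑_{y∈𝒴} f( (Q(y)·φ'(q_y)) / (Q'(y)·φ'(q'_y)) ) · Q'(y) · φ'(q'_y). -/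

import Mathlib

open Finset Real

/-- Cumulative mass `Q(≤ y)` of a pmf on a finite linearly ordered set. -/
noncomputable def cumLE {Y : Type*} [Fintype Y] [LinearOrder Y] (Q : Y → ℝ) (y : Y) : ℝ :=
  ∑ z ∈ Finset.univ.filter (fun z => z ≤ y), Q z

/-- Cumulative mass `Q(< y)` of a pmf on a finite linearly ordered set. -/
noncomputable def cumLT {Y : Type*} [Fintype Y] [LinearOrder Y] (Q : Y → ℝ) (y : Y) : ℝ :=
  ∑ z ∈ Finset.univ.filter (fun z => z < y), Q z

/-- A convex function on `[0,∞)` has a subgradient at any positive point. -/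
lemma exists_subgradient_aux {f : ℝ → ℝ} (hf : ConvexOn ℝ (Set.Ici 0) f)
    {x0 : ℝ} (hx0 : 0 < x0) :
    ∃ c : ℝ, ∀ x ∈ Set.Ici (0 : ℝ), f x0 + c * (x - x0) ≤ f x := by
  set T : Set ℝ := (fun z => (f z - f x0) / (z - x0)) '' Set.Ioi x0 with hT
  have hne : T.Nonempty := ⟨_, ⟨x0 + 1, by simp, rfl⟩⟩
  have hmem0 : x0 / 2 ∈ Set.Ici (0 : ℝ) := by
    simp only [Set.mem_Ici]; linarith
  have hx0mem : x0 ∈ Set.Ici (0 : ℝ) := hx0.le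
  have key : ∀ z, x0 < z → (f x0 - f (x0 / 2)) / (x0 - x0 / 2) ≤ (f z - f x0) / (z - x0) := by
    intro z hz
    exact hf.slope_mono_adjacent hmem0 (le_of_lt (hx0.trans hz)) (by linarith) hz
  have hbdd : BddBelow T := by
    refine ⟨(f x0 - f (x0 / 2)) / (x0 - x0 / 2), ?_⟩
    rintro s ⟨z, hz, rfl⟩
    exact key z hz
  refine ⟨sInf T, ?_⟩
  intro x hx
  rcases lt_trichotomy x x0 with hlt | heq | hgt
  · -- x < x0
    have hlow : (f x0 - f x) / (x0 - x) ≤ sInf T := by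
      refine le_csInf hne ?_
      rintro s ⟨z, hz, rfl⟩
      exact hf.slope_mono_adjacent hx (le_of_lt (hx0.trans hz)) hlt hz
    have hpos : (0 : ℝ) < x0 - x := by linarith
    have := (div_le_iff₀ hpos).1 hlow
    nlinarith
  · subst heq; simp
  · -- x0 < x
    have hup : sInf T ≤ (f x - f x0) / (x - x0) := csInf_le hbdd ⟨x, hgt, rfl⟩
    have hpos : (0 : ℝ) < x - x0 := by linarith
    have := (le_div_iff₀ hpos).1 hup
    nlinarith

/-- Theorem 4.1: general f-divergence bound for private selection. -/
theorem private_selection_f_divergence_bound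
    {Y : Type*} [Fintype Y] [LinearOrder Y]
    (Q Q' : Y → ℝ)
    (hQ_pos : ∀ y, 0 < Q y) (hQ_le : ∀ y, Q y ≤ 1) (hQ_sum : ∑ y, Q y = 1)
    (hQ'_pos : ∀ y, 0 < Q' y) (hQ'_le : ∀ y, Q' y ≤ 1) (hQ'_sum : ∑ y, Q' y = 1)
    (w : ℕ → ℝ) (hw_nonneg : ∀ k, 0 ≤ w k) (hw_zero : w 0 = 0)
    (hw_sum : ∑' k, w k = 1)
    (φ : ℝ → ℝ) (hφ : ∀ z, φ z = ∑' k, w k * z ^ k)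
    (φderiv : ℝ → ℝ)
    (hφderiv : ∀ z, φderiv z = ∑' k : ℕ, (k : ℝ) * w k * z ^ (k - 1))
    (hφderiv_summable : ∀ z ∈ Set.Icc (0 : ℝ) 1,
      Summable (fun k : ℕ => (k : ℝ) * w k * z ^ (k - 1)))
    (hφderiv_pos : ∀ z ∈ Set.Icc (0 : ℝ) 1, 0 < φderiv z)
    (f : ℝ → ℝ) (hf : ConvexOn ℝ (Set.Ici 0) f)
    (A A' : Y → ℝ)
    (hA : ∀ y, A y = φ (cumLE Q y) - φ (cumLT Q y))
    (hA' : ∀ y, A' y = φ (cumLE Q' y) - φ (cumLT Q' y)) :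
    ∃ g : Y → Y → ℝ, (∀ y z, g y z ∈ Set.Icc (0 : ℝ) 1) ∧
      ∑ y, f (A y / A' y) * A' y ≤
        ∑ y, f ((Q y * φderiv (∑ z, g y z * Q z)) / (Q' y * φderiv (∑ z, g y z * Q' z)))
          * (Q' y * φderiv (∑ z, g y z * Q' z)) := by
  classical
  -- the clamp function
  set cl : ℝ → ℝ := fun x => max 0 (min x 1) with hcl
  have cl_mem : ∀ x, cl x ∈ Set.Icc (0 : ℝ) 1 :=
    fun x => ⟨le_max_left _ _, max_le (by norm_num) (min_le_right _ _)⟩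
  have cl_eq : ∀ x ∈ Set.Icc (0 : ℝ) 1, cl x = x := by
    intro x hx
    simp only [hcl]
    rw [min_eq_left hx.2, max_eq_right hx.1]
  have cl_cont : Continuous cl := continuous_const.max (continuous_id.min continuous_const)
  -- summability facts
  have hkw : Summable (fun k : ℕ => (k : ℝ) * w k) := by
    have := hφderiv_summable 1 (by norm_num)
    simpa using this
  have hkw_nonneg : ∀ k : ℕ, 0 ≤ (k : ℝ) * w k :=
    fun k => mul_nonneg (Nat.cast_nonneg k) (hw_nonneg k)
  have hw_summable : Summable w := by
    refine Summable.of_nonneg_of_le hw_nonneg (fun k => ?_) hkw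
    rcases Nat.eq_zero_or_pos k with h | h
    · simp [h, hw_zero]
    · have h1 : (1 : ℝ) ≤ (k : ℝ) := by exact_mod_cast h
      nlinarith [hw_nonneg k]
  -- continuity of φderiv on [0,1]
  have hφd_cont : ContinuousOn φderiv (Set.Icc 0 1) := by
    have hcont : Continuous fun x => ∑' k : ℕ, (k : ℝ) * w k * (cl x) ^ (k - 1) := by
      refine continuous_tsum (fun k => by fun_prop) hkw (fun k x => ?_)
      have h1 : |cl x| ≤ 1 := abs_le.2 ⟨by linarith [(cl_mem x).1], (cl_mem x).2⟩
      have h2 : |cl x| ^ (k - 1) ≤ 1 := pow_le_one₀ (abs_nonneg _) h1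
      rw [Real.norm_eq_abs, abs_mul, abs_mul, abs_of_nonneg (Nat.cast_nonneg k : (0:ℝ) ≤ k),
        abs_of_nonneg (hw_nonneg k), abs_pow]
      nlinarith [hkw_nonneg k]
    refine ContinuousOn.congr hcont.continuousOn (fun x hx => ?_)
    rw [hφderiv x, cl_eq x hx]
  -- continuity of φ on [0,1]
  have hφ_cont : ContinuousOn φ (Set.Icc 0 1) := by
    have hcont : Continuous fun x => ∑' k : ℕ, w k * (cl x) ^ k := by
      refine continuous_tsum (fun k => by fun_prop) hw_summable (fun k x => ?_)
      have h1 : |cl x| ≤ 1 := abs_le.2 ⟨by linarith [(cl_mem x).1], (cl_mem x).2⟩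
      have h2 : |cl x| ^ k ≤ 1 := pow_le_one₀ (abs_nonneg _) h1
      rw [Real.norm_eq_abs, abs_mul, abs_of_nonneg (hw_nonneg k), abs_pow]
      nlinarith [hw_nonneg k]
    refine ContinuousOn.congr hcont.continuousOn (fun x hx => ?_)
    rw [hφ x, cl_eq x hx]
  -- derivative of φ on (0,1)
  have hφd_deriv : ∀ z ∈ Set.Ioo (0 : ℝ) 1, HasDerivAt φ (φderiv z) z := by
    intro z hz
    have hz' : z ∈ Set.Ioo (-1 : ℝ) 1 := ⟨by linarith [hz.1], hz.2⟩
    have h0 : (0 : ℝ) ∈ Set.Ioo (-1 : ℝ) 1 := by norm_num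
    have hsum0 : Summable (fun k : ℕ => w k * (0 : ℝ) ^ k) := by
      refine Summable.of_nonneg_of_le (fun k => ?_) (fun k => ?_) hw_summable
      · rcases Nat.eq_zero_or_pos k with h | h
        · simp [h, hw_zero]
        · rw [zero_pow (Nat.pos_iff_ne_zero.1 h)]; simp
      · rcases Nat.eq_zero_or_pos k with h | h
        · simp [h, hw_zero]
        · rw [zero_pow (Nat.pos_iff_ne_zero.1 h)]; simp [hw_nonneg k]
    have hDA : HasDerivAt (fun x : ℝ => ∑' k : ℕ, w k * x ^ k)
        (∑' k : ℕ, (k : ℝ) * w k * z ^ (k - 1)) z := by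
      refine hasDerivAt_tsum_of_isPreconnected hkw isOpen_Ioo
        (isPreconnected_Ioo) (g := fun k x => w k * x ^ k)
        (g' := fun k x => (k : ℝ) * w k * x ^ (k - 1)) (fun n y _ => ?_)
        (fun n y hy => ?_) h0 hsum0 hz'
      · have hp := (hasDerivAt_pow n y).const_mul (w n)
        convert hp using 1
        rfl
        ring
      · have h1 : |y| ≤ 1 := abs_le.2 ⟨hy.1.le, hy.2.le⟩
        have h2 : |y| ^ (n - 1) ≤ 1 := pow_le_one₀ (abs_nonneg _) h1
        rw [Real.norm_eq_abs, abs_mul, abs_mul, abs_of_nonneg (Nat.cast_nonneg n : (0:ℝ) ≤ n),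
          abs_of_nonneg (hw_nonneg n), abs_pow]
        nlinarith [hkw_nonneg n]
    have hfun : (fun x : ℝ => ∑' k : ℕ, w k * x ^ k) = φ := (funext hφ).symm
    rw [hφderiv z]
    rw [hfun] at hDA
    exact hDA
  -- FTC
  have hFTC : ∀ a b : ℝ, 0 ≤ a → a ≤ b → b ≤ 1 → ∫ z in a..b, φderiv z = φ b - φ a := by
    intro a b ha hab hb1
    have hsub : Set.Icc a b ⊆ Set.Icc 0 1 := Set.Icc_subset_Icc ha hb1
    refine intervalIntegral.integral_eq_sub_of_hasDeriv_right_of_le hab (hφ_cont.mono hsub)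
      (fun x hx => ?_) ((hφd_cont.mono hsub).intervalIntegrable_of_Icc hab)
    exact (hφd_deriv x ⟨lt_of_le_of_lt ha hx.1, lt_of_lt_of_le hx.2 hb1⟩).hasDerivWithinAt
  -- filter decomposition
  have hfilter : ∀ y : Y, Finset.univ.filter (fun z => z ≤ y)
      = insert y (Finset.univ.filter (fun z => z < y)) := by
    intro y
    ext z
    simp [le_iff_lt_or_eq, or_comm]
  have cumLE_eq : ∀ (R : Y → ℝ) (y : Y), cumLE R y = cumLT R y + R y := by
    intro R y
    unfold cumLE cumLT
    rw [hfilter y, Finset.sum_insert (by simp)]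
    ring
  have cum_nonneg : ∀ (R : Y → ℝ), (∀ z, 0 < R z) → ∀ y : Y, 0 ≤ cumLT R y :=
    fun R hR y => Finset.sum_nonneg fun z _ => (hR z).le
  have cumLE_le_one : ∀ (R : Y → ℝ), (∀ z, 0 < R z) → (∑ z, R z = 1) → ∀ y : Y, cumLE R y ≤ 1 := by
    intro R hR hsum y
    rw [← hsum]
    exact Finset.sum_le_sum_of_subset_of_nonneg (Finset.filter_subset _ _)
      (fun z _ _ => (hR z).le)
  -- the per-point key step
  have key : ∀ y : Y, ∃ t ∈ Set.Icc (0 : ℝ) 1,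
      f (A y / A' y) * A' y ≤
        f ((Q y * φderiv (cumLT Q y + t * Q y)) / (Q' y * φderiv (cumLT Q' y + t * Q' y)))
          * (Q' y * φderiv (cumLT Q' y + t * Q' y)) := by
    intro y
    set a := cumLT Q y with hadef
    set a' := cumLT Q' y with ha'def
    have ha0 : 0 ≤ a := cum_nonneg Q hQ_pos y
    have ha'0 : 0 ≤ a' := cum_nonneg Q' hQ'_pos y
    have hb1 : a + Q y ≤ 1 := by
      have := cumLE_le_one Q hQ_pos hQ_sum y
      rw [cumLE_eq Q y] at this
      linarith
    have hb'1 : a' + Q' y ≤ 1 := by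
      have := cumLE_le_one Q' hQ'_pos hQ'_sum y
      rw [cumLE_eq Q' y] at this
      linarith
    set u : ℝ → ℝ := fun t => Q y * φderiv (a + t * Q y) with hu
    set v : ℝ → ℝ := fun t => Q' y * φderiv (a' + t * Q' y) with hv
    have harg : ∀ t ∈ Set.Icc (0 : ℝ) 1, a + t * Q y ∈ Set.Icc (0 : ℝ) 1 := by
      intro t ht
      constructor
      · exact add_nonneg ha0 (mul_nonneg ht.1 (hQ_pos y).le)
      · nlinarith [hQ_pos y, ht.2, ht.1]
    have harg' : ∀ t ∈ Set.Icc (0 : ℝ) 1, a' + t * Q' y ∈ Set.Icc (0 : ℝ) 1 := by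
      intro t ht
      constructor
      · exact add_nonneg ha'0 (mul_nonneg ht.1 (hQ'_pos y).le)
      · nlinarith [hQ'_pos y, ht.2, ht.1]
    have haff : ∀ c d : ℝ, ContinuousOn (fun t : ℝ => c + t * d) (Set.Icc 0 1) := by
      intro c d; fun_prop
    have hu_cont : ContinuousOn u (Set.Icc 0 1) :=
      continuousOn_const.mul ((hφd_cont.comp (haff a (Q y)) harg))
    have hv_cont : ContinuousOn v (Set.Icc 0 1) :=
      continuousOn_const.mul ((hφd_cont.comp (haff a' (Q' y)) harg'))
    have hu_pos : ∀ t ∈ Set.Icc (0 : ℝ) 1, 0 < u t :=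
      fun t ht => mul_pos (hQ_pos y) (hφderiv_pos _ (harg t ht))
    have hv_pos : ∀ t ∈ Set.Icc (0 : ℝ) 1, 0 < v t :=
      fun t ht => mul_pos (hQ'_pos y) (hφderiv_pos _ (harg' t ht))
    have hu_int : IntervalIntegrable u MeasureTheory.volume 0 1 :=
      hu_cont.intervalIntegrable_of_Icc zero_le_one
    have hv_int : IntervalIntegrable v MeasureTheory.volume 0 1 :=
      hv_cont.intervalIntegrable_of_Icc zero_le_one
    -- integral representations
    have hrep : ∀ (R : Y → ℝ), (∀ z, 0 < R z) → ∀ (b : ℝ), 0 ≤ b → b + R y ≤ 1 →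
        (∫ t in (0:ℝ)..1, R y * φderiv (b + t * R y)) = φ (b + R y) - φ b := by
      intro R hR b hb0 hb1'
      have hne : R y ≠ 0 := (hR y).ne'
      calc (∫ t in (0:ℝ)..1, R y * φderiv (b + t * R y))
          = ∫ t in (0:ℝ)..1, R y * φderiv (R y * t + b) := by
            refine intervalIntegral.integral_congr (fun t _ => ?_)
            ring_nf
        _ = R y * ∫ t in (0:ℝ)..1, φderiv (R y * t + b) :=
            intervalIntegral.integral_const_mul _ _
        _ = R y * ((R y)⁻¹ • ∫ z in (R y * 0 + b)..(R y * 1 + b), φderiv z) := by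
            rw [intervalIntegral.integral_comp_mul_add φderiv hne b]
        _ = ∫ z in b..(b + R y), φderiv z := by
            rw [smul_eq_mul, mul_zero, zero_add, mul_one, ← mul_assoc,
              mul_inv_cancel₀ hne, one_mul, add_comm (R y) b]
        _ = φ (b + R y) - φ b := hFTC b (b + R y) hb0 (by linarith [hR y]) hb1'
    have hIntu : (∫ t in (0:ℝ)..1, u t) = A y := by
      have := hrep Q hQ_pos a ha0 hb1
      rw [hu, this, hA y, cumLE_eq Q y, ← hadef]
    have hIntv : (∫ t in (0:ℝ)..1, v t) = A' y := by
      have := hrep Q' hQ'_pos a' ha'0 hb'1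
      rw [hv, this, hA' y, cumLE_eq Q' y, ← ha'def]
    have hA_pos : 0 < A y := by
      rw [← hIntu]
      exact intervalIntegral.intervalIntegral_pos_of_pos_on hu_int
        (fun t ht => hu_pos t ⟨ht.1.le, ht.2.le⟩) one_pos
    have hA'_pos : 0 < A' y := by
      rw [← hIntv]
      exact intervalIntegral.intervalIntegral_pos_of_pos_on hv_int
        (fun t ht => hv_pos t ⟨ht.1.le, ht.2.le⟩) one_pos
    set x0 : ℝ := A y / A' y with hx0def
    have hx0 : 0 < x0 := div_pos hA_pos hA'_pos
    obtain ⟨c, hc⟩ := exists_subgradient_aux hf hx0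
    set G : ℝ → ℝ := fun t => f x0 * v t + c * (u t - x0 * v t) with hG
    have hG_cont : ContinuousOn G (Set.Icc 0 1) :=
      (continuousOn_const.mul hv_cont).add
        (continuousOn_const.mul (hu_cont.sub (continuousOn_const.mul hv_cont)))
    have hG_int : IntervalIntegrable G MeasureTheory.volume 0 1 :=
      hG_cont.intervalIntegrable_of_Icc zero_le_one
    have hIntG : (∫ t in (0:ℝ)..1, G t) = f x0 * A' y := by
      have h2int : IntervalIntegrable (fun t => u t - x0 * v t) MeasureTheory.volume 0 1 :=
        hu_int.sub (hv_int.const_mul x0)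
      have e1 : (∫ t in (0:ℝ)..1, G t)
          = (∫ t in (0:ℝ)..1, f x0 * v t) + ∫ t in (0:ℝ)..1, c * (u t - x0 * v t) :=
        intervalIntegral.integral_add (hv_int.const_mul (f x0)) (h2int.const_mul c)
      have e2 : (∫ t in (0:ℝ)..1, f x0 * v t) = f x0 * ∫ t in (0:ℝ)..1, v t :=
        intervalIntegral.integral_const_mul _ _
      have e3 : (∫ t in (0:ℝ)..1, c * (u t - x0 * v t))
          = c * ∫ t in (0:ℝ)..1, (u t - x0 * v t) :=
        intervalIntegral.integral_const_mul _ _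
      have e4 : (∫ t in (0:ℝ)..1, (u t - x0 * v t))
          = (∫ t in (0:ℝ)..1, u t) - ∫ t in (0:ℝ)..1, x0 * v t :=
        intervalIntegral.integral_sub hu_int (hv_int.const_mul x0)
      have e5 : (∫ t in (0:ℝ)..1, x0 * v t) = x0 * ∫ t in (0:ℝ)..1, v t :=
        intervalIntegral.integral_const_mul _ _
      rw [e1, e2, e3, e4, e5, hIntu, hIntv]
      have hx0A : x0 * A' y = A y := div_mul_cancel₀ (A y) hA'_pos.ne'
      rw [hx0A]
      ring
    obtain ⟨t0, ht0mem, ht0max⟩ :=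
      isCompact_Icc.exists_isMaxOn (Set.nonempty_Icc.2 zero_le_one) hG_cont
    have hmax : (∫ t in (0:ℝ)..1, G t) ≤ G t0 := by
      calc (∫ t in (0:ℝ)..1, G t) ≤ ∫ _t in (0:ℝ)..1, G t0 :=
            intervalIntegral.integral_mono_on zero_le_one hG_int intervalIntegrable_const
              (fun x hx => ht0max hx)
        _ = G t0 := by simp
    have hv0pos := hv_pos t0 ht0mem
    have hu0pos := hu_pos t0 ht0mem
    have hrat : u t0 / v t0 ∈ Set.Ici (0 : ℝ) := (div_pos hu0pos hv0pos).le
    have hsubg := hc _ hrat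
    have hfinal : G t0 ≤ f (u t0 / v t0) * v t0 := by
      have hmul := mul_le_mul_of_nonneg_right hsubg hv0pos.le
      have hv0ne : v t0 ≠ 0 := hv0pos.ne'
      have hexp : (f x0 + c * (u t0 / v t0 - x0)) * v t0 = G t0 := by
        calc (f x0 + c * (u t0 / v t0 - x0)) * v t0
            = f x0 * v t0 + c * (u t0 / v t0 * v t0 - x0 * v t0) := by ring
          _ = f x0 * v t0 + c * (u t0 - x0 * v t0) := by
              rw [div_mul_cancel₀ _ hv0ne]
          _ = G t0 := rfl
      linarith [hexp ▸ hmul]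
    refine ⟨t0, ht0mem, ?_⟩
    have : f x0 * A' y ≤ f (u t0 / v t0) * v t0 := by
      rw [← hIntG]
      exact hmax.trans hfinal
    simpa [hu, hv, hx0def] using this
  -- assemble the function g
  choose t ht_mem ht_ineq using key
  refine ⟨fun y z => if z < y then 1 else if z = y then t y else 0, ?_, ?_⟩
  · intro y z
    dsimp only
    split_ifs
    · exact ⟨zero_le_one, le_refl 1⟩
    · exact ht_mem y
    · exact ⟨le_refl 0, zero_le_one⟩
  · have hsum_eq : ∀ (R : Y → ℝ) (y : Y),
        (∑ z, (if z < y then (1:ℝ) else if z = y then t y else 0) * R z)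
          = cumLT R y + t y * R y := by
      intro R y
      rw [← Finset.sum_subset (Finset.filter_subset (fun z => z ≤ y) Finset.univ)
        (fun z _ hz => ?_)]
      · rw [hfilter y, Finset.sum_insert (by simp)]
        rw [Finset.sum_congr rfl (fun z hz => ?_)]
        · have hy : (if y < y then (1:ℝ) else if y = y then t y else 0) * R y = t y * R y := by
            simp
          rw [hy]
          unfold cumLT
          ring
        · rw [if_pos (Finset.mem_filter.1 hz).2, one_mul]
      · simp only [Finset.mem_filter, Finset.mem_univ, true_and] at hz
        rw [if_neg (fun h => hz h.le), if_neg (fun h => hz (le_of_eq h)), zero_mul]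
    refine Finset.sum_le_sum (fun y _ => ?_)
    simp only []
    rw [hsum_eq Q y, hsum_eq Q' y]
    exact ht_ineq y
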